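/- arXiv:2006.05053 — 5 statements merged into one kernel-verified Lean document; each statement's English description precedes it below -/
import Mathlib

section
/- The map Υ : VSLAM_n(3) × T̊_n(3) → T̊_n(3) defined by Υ((A,(Q,a)_i),(P,p_i)) = (PA, (a_i⁻¹ R_{PA} Q_iᵀ R_Pᵀ(p_i − x_P) + x_{PA})_i) is a right group action: Υ(id, (P,p_i)) = (P,p_i) for all (P,p_i), and Υ((A₁,(Q₁,a₁)_i), Υ((A₂,(Q₂,a₂)_i), (P,p_i))) = Υ((A₂A₁,(Q₂Q₁, a₂a₁)_i), (P,p_i)) for all group elements and all (P,p_i) ∈ T̊_n(3). -/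
open Matrix

/-- The action `Υ` of `VSLAM_n(3)` on the total space.  An element of `SE(3)` is a pair
`(R, x)` of a rotation matrix and a translation vector, with `PA = (R_P * R_A, R_P x_A + x_P)`.
The group element is `(A, xA, (Q i, a i)_i)` and the point is `((P, xP), p)`. -/
noncomputable def Upsilon (n : ℕ)
    (A : Matrix (Fin 3) (Fin 3) ℝ) (xA : Fin 3 → ℝ)
    (Q : Fin n → Matrix (Fin 3) (Fin 3) ℝ) (a : Fin n → ℝ)
    (P : Matrix (Fin 3) (Fin 3) ℝ) (xP : Fin 3 → ℝ) (p : Fin n → Fin 3 → ℝ) :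
    (Matrix (Fin 3) (Fin 3) ℝ × (Fin 3 → ℝ)) × (Fin n → Fin 3 → ℝ) :=
  ((P * A, P *ᵥ xA + xP),
    fun i => (a i)⁻¹ • ((P * A) *ᵥ ((Q i)ᵀ *ᵥ (Pᵀ *ᵥ (p i - xP)))) + (P *ᵥ xA + xP))

/-- `Υ` is a right group action of `VSLAM_n(3)` on the total space `T̊_n(3)`:
the identity acts trivially, and
`Υ(X₁, Υ(X₂, ξ)) = Υ(X₂ · X₁, ξ)` where
`X₂ · X₁ = (A₂A₁, (Q₂Q₁, a₂a₁)_i)` with `A₂A₁ = (R_{A₂}R_{A₁}, R_{A₂}x_{A₁} + x_{A₂})`. -/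
theorem upsilon_is_right_action (n : ℕ)
    (A₁ A₂ : Matrix (Fin 3) (Fin 3) ℝ) (xA₁ xA₂ : Fin 3 → ℝ)
    (Q₁ Q₂ : Fin n → Matrix (Fin 3) (Fin 3) ℝ) (a₁ a₂ : Fin n → ℝ)
    (P : Matrix (Fin 3) (Fin 3) ℝ) (xP : Fin 3 → ℝ) (p : Fin n → Fin 3 → ℝ)
    (hA₁ : A₁ᵀ * A₁ = 1 ∧ A₁.det = 1) (hA₂ : A₂ᵀ * A₂ = 1 ∧ A₂.det = 1)
    (hQ₁ : ∀ i, (Q₁ i)ᵀ * Q₁ i = 1 ∧ (Q₁ i).det = 1)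
    (hQ₂ : ∀ i, (Q₂ i)ᵀ * Q₂ i = 1 ∧ (Q₂ i).det = 1)
    (ha₁ : ∀ i, 0 < a₁ i) (ha₂ : ∀ i, 0 < a₂ i)
    (hP : Pᵀ * P = 1 ∧ P.det = 1)
    (hp : ∀ i, p i ≠ xP) :
    Upsilon n 1 0 (fun _ => 1) (fun _ => 1) P xP p = ((P, xP), p) ∧
    Upsilon n A₁ xA₁ Q₁ a₁
        (Upsilon n A₂ xA₂ Q₂ a₂ P xP p).1.1 (Upsilon n A₂ xA₂ Q₂ a₂ P xP p).1.2
        (Upsilon n A₂ xA₂ Q₂ a₂ P xP p).2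
      = Upsilon n (A₂ * A₁) (A₂ *ᵥ xA₁ + xA₂) (fun i => Q₂ i * Q₁ i)
          (fun i => a₂ i * a₁ i) P xP p := by
  have hPPT : P * Pᵀ = 1 := mul_eq_one_comm.mp hP.1
  constructor
  · simp only [Upsilon]
    ext <;> simp [hPPT, mulVec_mulVec, sub_add_cancel_right]
  · simp only [Upsilon, Prod.mk.injEq]
    have hPA₂ : (P * A₂)ᵀ * (P * A₂) = 1 := by
      rw [transpose_mul, mul_assoc, ← mul_assoc Pᵀ, hP.1, one_mul, hA₂.1]
    refine ⟨⟨by rw [mul_assoc], by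
      rw [mulVec_add, mulVec_mulVec, add_assoc]⟩, funext fun i => ?_⟩
    have key : (P * A₂)ᵀ *ᵥ
        ((a₂ i)⁻¹ • ((P * A₂) *ᵥ ((Q₂ i)ᵀ *ᵥ (Pᵀ *ᵥ (p i - xP)))) + (P *ᵥ xA₂ + xP)
          - (P *ᵥ xA₂ + xP))
        = (a₂ i)⁻¹ • ((Q₂ i)ᵀ *ᵥ (Pᵀ *ᵥ (p i - xP))) := by
      rw [add_sub_cancel_right, mulVec_smul, mulVec_mulVec, hPA₂, one_mulVec]
    rw [key]
    simp only [mulVec_smul, smul_smul, mulVec_mulVec, transpose_mul, mulVec_add,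
      mul_assoc, _root_.mul_inv_rev]
    abel
end

section
/- The combined bearing output h is equivariant with respect to the actions Υ and ρ: for any X = (A,(Q,a)_i) ∈ VSLAM_n(3) and any ξ = (P, p_i) ∈ T̊_n(3), h(Υ(X, ξ)) = ρ(X, h(ξ)); componentwise, h^i applied to the i-th landmark of Υ(X,ξ) equals Q_iᵀ h^i(P, p_i). -/
open Matrix

/-- The Euclidean norm of a vector in `ℝ³`. -/
noncomputable def enorm3 (v : Fin 3 → ℝ) : ℝ := ‖(EuclideanSpace.equiv (Fin 3) ℝ).symm v‖

/-- The bearing output `h^i(P, p) = R_Pᵀ(p − x_P)/‖p − x_P‖`. -/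
noncomputable def bearing (R : Matrix (Fin 3) (Fin 3) ℝ) (x p : Fin 3 → ℝ) : Fin 3 → ℝ :=
  (enorm3 (p - x))⁻¹ • (Rᵀ *ᵥ (p - x))

-- Auxiliary lemmas
lemma enorm3_eq (v : Fin 3 → ℝ) : enorm3 v = Real.sqrt (v ⬝ᵥ v) := by
  rw [enorm3, EuclideanSpace.norm_eq]
  congr 1
  simp [dotProduct, Real.norm_eq_abs, sq_abs, sq]

lemma enorm3_smul (c : ℝ) (v : Fin 3 → ℝ) : enorm3 (c • v) = |c| * enorm3 v := by
  simp [enorm3, norm_smul, Real.norm_eq_abs]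

lemma enorm3_mulVec (M : Matrix (Fin 3) (Fin 3) ℝ) (hM : Mᵀ * M = 1) (v : Fin 3 → ℝ) :
    enorm3 (M *ᵥ v) = enorm3 v := by
  rw [enorm3_eq, enorm3_eq]
  congr 1
  calc (M *ᵥ v) ⬝ᵥ (M *ᵥ v) = (v ᵥ* Mᵀ) ⬝ᵥ (M *ᵥ v) := by rw [vecMul_transpose]
    _ = ((v ᵥ* Mᵀ) ᵥ* M) ⬝ᵥ v := by rw [dotProduct_mulVec]
    _ = (v ᵥ* (Mᵀ * M)) ⬝ᵥ v := by rw [vecMul_vecMul]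
    _ = v ⬝ᵥ v := by rw [hM, vecMul_one]

lemma enorm3_ne_zero {v : Fin 3 → ℝ} (hv : v ≠ 0) : enorm3 v ≠ 0 := by
  simp only [enorm3, norm_ne_zero_iff]
  intro h
  apply hv
  have := congrArg (EuclideanSpace.equiv (Fin 3) ℝ) h
  simpa using this


/-- Equivariance of the combined bearing output `h` with respect to the actions `Υ` and `ρ`:
for `X = (A,(Q,a)_i) ∈ VSLAM_n(3)` and `ξ = (P, p_i) ∈ T̊_n(3)`, componentwise
`h^i` applied to the `i`-th landmark of `Υ(X, ξ)` equals `Q_iᵀ h^i(P, p_i)`.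
Here `Υ((A,(Q,a)_i),(P,p_i)) = (PA, (a_i⁻¹ R_{PA} Q_iᵀ R_Pᵀ(p_i − x_P) + x_{PA})_i)`,
with `R_{PA} = R_P R_A` and `x_{PA} = R_P x_A + x_P`, and `ρ((A,(Q,a)_i),(y_i)) = (Q_iᵀ y_i)`. -/
theorem output_equivariance (n : ℕ)
    (A : Matrix (Fin 3) (Fin 3) ℝ) (xA : Fin 3 → ℝ)
    (Q : Fin n → Matrix (Fin 3) (Fin 3) ℝ) (a : Fin n → ℝ)
    (P : Matrix (Fin 3) (Fin 3) ℝ) (xP : Fin 3 → ℝ) (p : Fin n → Fin 3 → ℝ)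
    (hA : Aᵀ * A = 1 ∧ A.det = 1)
    (hQ : ∀ i, (Q i)ᵀ * Q i = 1 ∧ (Q i).det = 1)
    (ha : ∀ i, 0 < a i)
    (hP : Pᵀ * P = 1 ∧ P.det = 1)
    (hp : ∀ i, p i ≠ xP) :
    ∀ i, bearing (P * A) (P *ᵥ xA + xP)
        ((a i)⁻¹ • ((P * A) *ᵥ ((Q i)ᵀ *ᵥ (Pᵀ *ᵥ (p i - xP)))) + (P *ᵥ xA + xP))
      = (Q i)ᵀ *ᵥ bearing P xP (p i) := by
  intro i
  set v : Fin 3 → ℝ := p i - xP with hv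
  have hvne : v ≠ 0 := sub_ne_zero.mpr (hp i)
  have hPA : (P * A)ᵀ * (P * A) = 1 := by
    rw [transpose_mul, mul_assoc, ← mul_assoc Pᵀ, hP.1, one_mul, hA.1]
  have hPPt : P * Pᵀ = 1 := mul_eq_one_comm.mp hP.1
  have hQQt : Q i * (Q i)ᵀ = 1 := mul_eq_one_comm.mp (hQ i).1
  have hPt : (Pᵀ)ᵀ * Pᵀ = 1 := by rw [transpose_transpose, hPPt]
  have hQt : ((Q i)ᵀ)ᵀ * (Q i)ᵀ = 1 := by rw [transpose_transpose, hQQt]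
  unfold bearing
  rw [add_sub_cancel_right]
  -- norms
  have hnorm : enorm3 ((a i)⁻¹ • ((P * A) *ᵥ ((Q i)ᵀ *ᵥ (Pᵀ *ᵥ v))))
      = (a i)⁻¹ * enorm3 v := by
    rw [enorm3_smul, enorm3_mulVec _ hPA, enorm3_mulVec _ hQt, enorm3_mulVec _ hPt,
      abs_of_pos (inv_pos.mpr (ha i))]
  rw [hnorm]
  have hmv : (P * A)ᵀ *ᵥ ((a i)⁻¹ • ((P * A) *ᵥ ((Q i)ᵀ *ᵥ (Pᵀ *ᵥ v))))
      = (a i)⁻¹ • ((Q i)ᵀ *ᵥ (Pᵀ *ᵥ v)) := by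
    rw [mulVec_smul]
    congr 1
    rw [mulVec_mulVec, hPA, one_mulVec]
  rw [hmv, mulVec_smul, smul_smul, ← hv]
  have key : enorm3 v ≠ 0 := enorm3_ne_zero hvne
  have hc : ((a i)⁻¹ * enorm3 v)⁻¹ * (a i)⁻¹ = (enorm3 v)⁻¹ := by
    rw [mul_inv, inv_inv, mul_right_comm, mul_inv_cancel₀ (ne_of_gt (ha i)), one_mul]
  rw [hc]
end

section
/- Under the action Υ, the ego-centric (body-fixed) landmark coordinates transform by rotation and scaling: if (P', p'_i) = Υ((A,(Q,a)_i), (P, p_i)), then for each i, R_{P'}ᵀ(p'_i − x_{P'}) = a_i⁻¹ Q_iᵀ R_Pᵀ(p_i − x_P), and consequently the range transforms as ‖p'_i − x_{P'}‖ = a_i⁻¹ ‖p_i − x_P‖. -/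
open Matrix

lemma enorm3_nonneg (v : Fin 3 → ℝ) : 0 ≤ enorm3 v := norm_nonneg _

lemma enorm3_sq (v : Fin 3 → ℝ) : enorm3 v ^ 2 = v ⬝ᵥ v := by
  simp only [enorm3, EuclideanSpace.norm_eq]
  rw [Real.sq_sqrt (by positivity)]
  simp [dotProduct, sq, Real.norm_eq_abs, sq_abs]

/-- Under the action `Υ`, where
`(P', p'_i) = Υ((A,(Q,a)_i), (P, p_i)) = (PA, (a_i⁻¹ R_{PA} Q_iᵀ R_Pᵀ(p_i − x_P) + x_{PA})_i)`
with `R_{PA} = R_P R_A` and `x_{PA} = R_P x_A + x_P`, the ego-centric landmark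
coordinates transform as `R_{P'}ᵀ(p'_i − x_{P'}) = a_i⁻¹ Q_iᵀ R_Pᵀ(p_i − x_P)`, and
consequently the range transforms as `‖p'_i − x_{P'}‖ = a_i⁻¹ ‖p_i − x_P‖`. -/
theorem egocentric_transform (n : ℕ)
    (A : Matrix (Fin 3) (Fin 3) ℝ) (xA : Fin 3 → ℝ)
    (Q : Fin n → Matrix (Fin 3) (Fin 3) ℝ) (a : Fin n → ℝ)
    (P : Matrix (Fin 3) (Fin 3) ℝ) (xP : Fin 3 → ℝ) (p : Fin n → Fin 3 → ℝ)
    (hA : Aᵀ * A = 1 ∧ A.det = 1)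
    (hQ : ∀ i, (Q i)ᵀ * Q i = 1 ∧ (Q i).det = 1)
    (ha : ∀ i, 0 < a i)
    (hP : Pᵀ * P = 1 ∧ P.det = 1) :
    ∀ i,
      (P * A)ᵀ *ᵥ
          (((a i)⁻¹ • ((P * A) *ᵥ ((Q i)ᵀ *ᵥ (Pᵀ *ᵥ (p i - xP)))) + (P *ᵥ xA + xP))
            - (P *ᵥ xA + xP))
        = (a i)⁻¹ • ((Q i)ᵀ *ᵥ (Pᵀ *ᵥ (p i - xP))) ∧
      enorm3 ((((a i)⁻¹ • ((P * A) *ᵥ ((Q i)ᵀ *ᵥ (Pᵀ *ᵥ (p i - xP)))) + (P *ᵥ xA + xP))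
            - (P *ᵥ xA + xP)))
        = (a i)⁻¹ * enorm3 (p i - xP) := by
  intro i
  have hPA : (P * A)ᵀ * (P * A) = 1 := by
    rw [Matrix.transpose_mul, Matrix.mul_assoc, ← Matrix.mul_assoc Pᵀ, hP.1, one_mul, hA.1]
  have hkey : ((a i)⁻¹ • ((P * A) *ᵥ ((Q i)ᵀ *ᵥ (Pᵀ *ᵥ (p i - xP)))) + (P *ᵥ xA + xP))
      - (P *ᵥ xA + xP) = (a i)⁻¹ • ((P * A) *ᵥ ((Q i)ᵀ *ᵥ (Pᵀ *ᵥ (p i - xP)))) := by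
    abel
  rw [hkey]
  constructor
  · rw [Matrix.mulVec_smul, Matrix.mulVec_mulVec, hPA, Matrix.one_mulVec]
  · rw [enorm3_smul, abs_of_pos (inv_pos.mpr (ha i)), enorm3_mulVec _ hPA,
      enorm3_mulVec _ (by rw [Matrix.transpose_transpose, mul_eq_one_comm.mp (hQ i).1]),
      enorm3_mulVec _ (by rw [Matrix.transpose_transpose, mul_eq_one_comm.mp hP.1])]
end

section
/- Derivative of the bearing alignment: let ẙ, δ ∈ ℝ³ be unit vectors with 1 + δᵀẙ ≠ 0, let w ∈ ℝ³, let r, r̂ be nonzero reals, and let k ∈ ℝ. Define the skew matrix Γ = (δᵀw/(2r̂) − (δ + ẙ)ᵀw/(r̂(1 + δᵀẙ)) − k)·(δ × ẙ)^×. Then ẙᵀ[ ((ẙ × w)/r̂ − (δ × w)/r) × δ − Γδ ] = ((r − r̂)/(r·r̂))·ẙᵀ(w − δ(δᵀw)) − (δᵀw/(2r̂) − k)·(1 − (δᵀẙ)²). -/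
open Matrix

/-- The skew-symmetric matrix `v^×` with `v^× u = v × u`. -/
def skew (v : Fin 3 → ℝ) : Matrix (Fin 3) (Fin 3) ℝ :=
  !![0, -v 2, v 1; v 2, 0, -v 0; -v 1, v 0, 0]

/-- Derivative of the bearing alignment: for unit vectors `ẙ, δ` with `1 + δᵀẙ ≠ 0`,
`w ∈ ℝ³`, nonzero `r, r̂` and `k ∈ ℝ`, with the rotational innovation
`Γ = (δᵀw/(2r̂) − (δ + ẙ)ᵀw/(r̂(1 + δᵀẙ)) − k)·(δ × ẙ)^×`, one has
`ẙᵀ[((ẙ × w)/r̂ − (δ × w)/r) × δ − Γδ]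
  = ((r − r̂)/(r·r̂))·ẙᵀ(w − δ(δᵀw)) − (δᵀw/(2r̂) − k)·(1 − (δᵀẙ)²)`. -/
theorem bearing_alignment_derivative (yo δ w : Fin 3 → ℝ) (r rh k : ℝ)
    (hyo : enorm3 yo = 1) (hδ : enorm3 δ = 1) (hx : 1 + δ ⬝ᵥ yo ≠ 0)
    (hr : r ≠ 0) (hrh : rh ≠ 0)
    (Γ : Matrix (Fin 3) (Fin 3) ℝ)
    (hΓ : Γ = ((δ ⬝ᵥ w) / (2 * rh) - ((δ + yo) ⬝ᵥ w) / (rh * (1 + δ ⬝ᵥ yo)) - k) •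
      skew (δ ⨯₃ yo)) :
    yo ⬝ᵥ ((rh⁻¹ • (yo ⨯₃ w) - r⁻¹ • (δ ⨯₃ w)) ⨯₃ δ - Γ *ᵥ δ)
      = ((r - rh) / (r * rh)) * (yo ⬝ᵥ (w - (δ ⬝ᵥ w) • δ))
        - ((δ ⬝ᵥ w) / (2 * rh) - k) * (1 - (δ ⬝ᵥ yo) ^ 2) := by
  have norm_sq : ∀ v : Fin 3 → ℝ, enorm3 v = 1 → v 0 ^ 2 + v 1 ^ 2 + v 2 ^ 2 = 1 := by
    intro v h
    have h2 := congrArg (· ^ 2) h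
    simp only [enorm3] at h2
    simp [EuclideanSpace.norm_eq, Fin.sum_univ_three,
      Real.sq_sqrt (show (0:ℝ) ≤ v 0 ^ 2 + v 1 ^ 2 + v 2 ^ 2 by positivity)] at h2
    linarith
  have hy2 := norm_sq yo hyo
  have hd2 := norm_sq δ hδ
  subst hΓ
  rw [dotProduct_sub]
  have e1 : yo ⬝ᵥ ((rh⁻¹ • (yo ⨯₃ w) - r⁻¹ • (δ ⨯₃ w)) ⨯₃ δ)
      = rh⁻¹ * ((δ ⬝ᵥ yo) * (yo ⬝ᵥ w) - (δ ⬝ᵥ w))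
        - r⁻¹ * ((yo ⬝ᵥ w) - (δ ⬝ᵥ yo) * (δ ⬝ᵥ w)) := by
    simp only [cross_apply, dotProduct, Fin.sum_univ_three, Pi.sub_apply, Pi.smul_apply,
      smul_eq_mul, Matrix.cons_val_zero, Matrix.cons_val_one, Matrix.head_cons,
      Matrix.cons_val_two, Matrix.tail_cons]
    linear_combination (-rh⁻¹ * (δ 0 * w 0 + δ 1 * w 1 + δ 2 * w 2)) * hy2
      + (-r⁻¹ * (yo 0 * w 0 + yo 1 * w 1 + yo 2 * w 2)) * hd2
  have e2 : ∀ l : ℝ, yo ⬝ᵥ ((l • skew (δ ⨯₃ yo)) *ᵥ δ) = l * (1 - (δ ⬝ᵥ yo) ^ 2) := by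
    intro l
    simp only [skew, cross_apply, dotProduct, mulVec, Fin.sum_univ_three,
      Pi.smul_apply, smul_eq_mul, Matrix.smul_apply, Matrix.cons_val', Matrix.cons_val_zero,
      Matrix.cons_val_one, Matrix.head_cons, Matrix.empty_val', Matrix.cons_val_fin_one,
      Matrix.head_fin_const, Matrix.of_apply, Matrix.cons_val_two, Matrix.tail_cons]
    linear_combination (l * (δ 0 ^ 2 + δ 1 ^ 2 + δ 2 ^ 2)) * hy2 + l * hd2
  have e3 : yo ⬝ᵥ (w - (δ ⬝ᵥ w) • δ) = (yo ⬝ᵥ w) - (δ ⬝ᵥ yo) * (δ ⬝ᵥ w) := by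
    simp only [dotProduct, Fin.sum_univ_three, Pi.sub_apply, Pi.smul_apply, smul_eq_mul]
    ring
  rw [e1, e2, e3, add_dotProduct]
  set c := δ ⬝ᵥ yo with hc
  set A := yo ⬝ᵥ w
  set B := δ ⬝ᵥ w
  field_simp
  ring
end

section
/- Closed form of the Lyapunov derivative: let ẙ, δ ∈ ℝ³ be unit vectors with 1 + ẙᵀδ ≠ 0, w ∈ ℝ³, r, r̂ > 0, α > 0, k ∈ ℝ, and β ∈ ℝ. Set x = ẙᵀδ, P = ẙᵀ(w − δ(δᵀw)), and define A = −δᵀw, B = −δᵀw + αβ + (α/r̂)·( ((1 − x)/(2(1 + x)))·δᵀw − P/(1 + x)² ), and C = ((r − r̂)/(r·r̂))·P − (δᵀw/(2r̂) − k)·(1 − x²). Then (A/2)·(1 − x)/(1 + x) − r·C/(1 + x)² + (1/α)·(r − r̂)·(A − B) = −k·r·(1 − x)/(1 + x) + (r̂ − r)·β. -/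
open Matrix

/-- Closed form of the Lyapunov derivative: for unit vectors `ẙ, δ` with `1 + ẙᵀδ ≠ 0`,
`w ∈ ℝ³`, `r, r̂ > 0`, `α > 0`, `k, β ∈ ℝ`, setting `x = ẙᵀδ`, `P = ẙᵀ(w − δ(δᵀw))`,
`A = −δᵀw`,
`B = −δᵀw + αβ + (α/r̂)(((1 − x)/(2(1 + x)))·δᵀw − P/(1 + x)²)`, and
`C = ((r − r̂)/(r·r̂))·P − (δᵀw/(2r̂) − k)·(1 − x²)`, one has
`(A/2)·(1 − x)/(1 + x) − r·C/(1 + x)² + (1/α)·(r − r̂)·(A − B)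
  = −k·r·(1 − x)/(1 + x) + (r̂ − r)·β`. -/
theorem lyapunov_derivative_closed_form (yo δ w : Fin 3 → ℝ) (r rh α k β : ℝ)
    (hyo : enorm3 yo = 1) (hδ : enorm3 δ = 1) (hx : 1 + yo ⬝ᵥ δ ≠ 0)
    (hr : 0 < r) (hrh : 0 < rh) (hα : 0 < α)
    (x P A B C : ℝ)
    (hxdef : x = yo ⬝ᵥ δ)
    (hP : P = yo ⬝ᵥ (w - (δ ⬝ᵥ w) • δ))
    (hA : A = -(δ ⬝ᵥ w))
    (hB : B = -(δ ⬝ᵥ w) + α * β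
        + (α / rh) * (((1 - x) / (2 * (1 + x))) * (δ ⬝ᵥ w) - P / (1 + x) ^ 2))
    (hC : C = ((r - rh) / (r * rh)) * P - ((δ ⬝ᵥ w) / (2 * rh) - k) * (1 - x ^ 2)) :
    (A / 2) * ((1 - x) / (1 + x)) - r * C / (1 + x) ^ 2 + (1 / α) * (r - rh) * (A - B)
      = -(k * r * ((1 - x) / (1 + x))) + (rh - r) * β := by
  have hx1 : (1 : ℝ) + x ≠ 0 := by rw [hxdef]; exact hx
  subst hA hB hC
  field_simp
  ring
end
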